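/- A free product (monoid coproduct) of a family {M_i : i ∈ I} of monoids satisfies the ascending chain condition on principal left ideals if and only if each M_i satisfies it; likewise, the restricted direct product of {M_i : i ∈ I} satisfies the ascending chain condition on principal left ideals if and only if each M_i satisfies it. -/

import Mathlib

/-! Common definitions for graph products of monoids. -/

variable {V : Type*}

/-- A letter of the graph product alphabet: an element of one of the vertex monoids,
tagged by its vertex (its *support*). -/
abbrev GPLetter (M : V → Type*) : Type _ := (α : V) × M α

/-- The defining relations of the graph product: identity letters are trivial,
letters from the same vertex monoid multiply, and letters at adjacent vertices commute. -/
def gpRel (G : SimpleGraph V) (M : V → Type*) [∀ α, Monoid (M α)] :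
    FreeMonoid (GPLetter M) → FreeMonoid (GPLetter M) → Prop := fun w₁ w₂ =>
  (∃ α : V, w₁ = FreeMonoid.of (⟨α, (1 : M α)⟩ : GPLetter M) ∧ w₂ = 1) ∨
  (∃ (α : V) (x y : M α),
      w₁ = FreeMonoid.of (⟨α, x⟩ : GPLetter M) * FreeMonoid.of (⟨α, y⟩ : GPLetter M) ∧
      w₂ = FreeMonoid.of (⟨α, x * y⟩ : GPLetter M)) ∨
  (∃ (α β : V) (x : M α) (y : M β), G.Adj α β ∧
      w₁ = FreeMonoid.of (⟨α, x⟩ : GPLetter M) * FreeMonoid.of (⟨β, y⟩ : GPLetter M) ∧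
      w₂ = FreeMonoid.of (⟨β, y⟩ : GPLetter M) * FreeMonoid.of (⟨α, x⟩ : GPLetter M))

/-- The congruence on the free monoid generated by the graph product relations. -/
def gpCon (G : SimpleGraph V) (M : V → Type*) [∀ α, Monoid (M α)] :
    Con (FreeMonoid (GPLetter M)) := conGen (gpRel G M)

/-- The graph product of the monoids `M α` with respect to the graph `G`. -/
abbrev GraphProduct (G : SimpleGraph V) (M : V → Type*) [∀ α, Monoid (M α)] :=
  (gpCon G M).Quotient

/-- The class `[w]` in the graph product of a word `w` (given as a list of letters). -/
def gpMk (G : SimpleGraph V) (M : V → Type*) [∀ α, Monoid (M α)]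
    (l : List (GPLetter M)) : GraphProduct G M :=
  (gpCon G M).mk' (FreeMonoid.ofList l)

/-- A word is reduced: no letter is an identity, and between any two letters with the
same support there is a letter whose support is not adjacent to it. -/
def GPReduced (G : SimpleGraph V) (M : V → Type*) [∀ α, Monoid (M α)]
    (l : List (GPLetter M)) : Prop :=
  (∀ x ∈ l, x.2 ≠ 1) ∧
    ∀ i j : Fin l.length, i < j → (l.get i).1 = (l.get j).1 →
      ∃ k : Fin l.length, i < k ∧ k < j ∧ ¬ G.Adj (l.get i).1 (l.get k).1

/-- One shuffle: transpose an adjacent pair of letters whose supports are adjacent in `G`. -/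
def ShuffleStep (G : SimpleGraph V) (M : V → Type*)
    (l₁ l₂ : List (GPLetter M)) : Prop :=
  ∃ (u v : List (GPLetter M)) (x y : GPLetter M),
    G.Adj x.1 y.1 ∧ l₁ = u ++ x :: y :: v ∧ l₂ = u ++ y :: x :: v

/-- Two words are shuffle equivalent if one is obtained from the other by a finite
sequence of shuffles. -/
def ShuffleEquiv (G : SimpleGraph V) (M : V → Type*) :
    List (GPLetter M) → List (GPLetter M) → Prop :=
  Relation.ReflTransGen (ShuffleStep G M)

/-- A letter is left invertible if it is left invertible in its vertex monoid. -/
def LeftInvertibleLetter (M : V → Type*) [∀ α, Monoid (M α)] (x : GPLetter M) : Prop :=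
  ∃ y : M x.1, y * x.2 = 1

/-- The set of supports of the letters of a word. -/
def suppSet (M : V → Type*) (l : List (GPLetter M)) : Set V := {α | ∃ x ∈ l, x.1 = α}

/-- A complete block: a reduced word whose support induces a complete subgraph of `G`. -/
def CompleteBlock (G : SimpleGraph V) (M : V → Type*) [∀ α, Monoid (M α)]
    (l : List (GPLetter M)) : Prop :=
  GPReduced G M l ∧ ∀ x ∈ l, ∀ y ∈ l, x.1 ≠ y.1 → G.Adj x.1 y.1

/-- A list of blocks is a left Foata normal form: the concatenation is reduced, each
block is nonempty with complete support, and each letter of a block fails to be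
adjacent to some letter of the preceding block. -/
def LeftFoataForm (G : SimpleGraph V) (M : V → Type*) [∀ α, Monoid (M α)]
    (blocks : List (List (GPLetter M))) : Prop :=
  GPReduced G M blocks.flatten ∧
  (∀ b ∈ blocks, b ≠ [] ∧ ∀ x ∈ b, ∀ y ∈ b, x.1 ≠ y.1 → G.Adj x.1 y.1) ∧
  List.Chain' (fun b₁ b₂ => ∀ y ∈ b₂, ∃ x ∈ b₁, ¬ G.Adj x.1 y.1) blocks

/-- The principal left ideal `S a = {s * a : s ∈ S}` of a monoid. -/
def plIdeal {S : Type*} [Monoid S] (a : S) : Set S := Set.range (· * a)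

/-- The ascending chain condition on principal left ideals. -/
def ACCPL (S : Type*) [Monoid S] : Prop :=
  ∀ a : ℕ → S, (∀ n, plIdeal (a n) ⊆ plIdeal (a (n + 1))) →
    ∃ n, ∀ k, plIdeal (a (n + k)) = plIdeal (a n)

/-- `A` is a left ideal of the monoid `S`. -/
def IsLeftIdeal {S : Type*} [Monoid S] (A : Set S) : Prop :=
  A.Nonempty ∧ ∀ s : S, ∀ a ∈ A, s * a ∈ A

/-- `A` is generated, as a left ideal, by a finite subset of itself. -/
def IsFGLeftIdeal {S : Type*} [Monoid S] (A : Set S) : Prop :=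
  ∃ F : Finset S, ↑F ⊆ A ∧ A = {x | ∃ s : S, ∃ a ∈ F, x = s * a}

/-- A monoid is weakly left noetherian if every left ideal is finitely generated. -/
def WeaklyLeftNoetherian (S : Type*) [Monoid S] : Prop :=
  ∀ A : Set S, IsLeftIdeal A → IsFGLeftIdeal A

/-- A monoid is left ideal Howson if the intersection of any two principal left ideals
is empty or finitely generated. -/
def LeftIdealHowson (S : Type*) [Monoid S] : Prop :=
  ∀ a b : S, plIdeal a ∩ plIdeal b = ∅ ∨ IsFGLeftIdeal (plIdeal a ∩ plIdeal b)

/-- An LCM monoid: intersections of principal left ideals are empty or principal. -/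
def LCMMonoid (S : Type*) [Monoid S] : Prop :=
  ∀ a b : S, plIdeal a ∩ plIdeal b = ∅ ∨ ∃ c : S, plIdeal a ∩ plIdeal b = plIdeal c

/-- A left congruence on a monoid. -/
def IsLeftCongruence {S : Type*} [Monoid S] (ρ : S → S → Prop) : Prop :=
  Equivalence ρ ∧ ∀ u s t : S, ρ s t → ρ (u * s) (u * t)

/-- The least left congruence containing a set of pairs. -/
def leftConGen {S : Type*} [Monoid S] (R : Set (S × S)) : S → S → Prop := fun s t =>
  ∀ ρ : S → S → Prop, IsLeftCongruence ρ → (∀ p ∈ R, ρ p.1 p.2) → ρ s t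

/-- A monoid is finitely left equated if every left annihilator `l(a)` is the left
congruence generated by a finite set. -/
def FinitelyLeftEquated (S : Type*) [Monoid S] : Prop :=
  ∀ a : S, ∃ R : Set (S × S), R.Finite ∧ ∀ s t : S, s * a = t * a ↔ leftConGen R s t

/-- A monoid is a group: every element has a two-sided inverse. -/
def IsGroupMonoid (S : Type*) [Monoid S] : Prop :=
  ∀ a : S, ∃ b : S, a * b = 1 ∧ b * a = 1

/-- Weakly left coherent: left ideal Howson and finitely left equated. -/
def WeaklyLeftCoherent (S : Type*) [Monoid S] : Prop :=
  LeftIdealHowson S ∧ FinitelyLeftEquated S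

/-- The restricted direct product of a family of monoids: elements of the direct
product with only finitely many non-identity coordinates. -/
def restrictedDirectProduct {ι : Type*} (M : ι → Type*) [∀ i, Monoid (M i)] :
    Submonoid (∀ i, M i) where
  carrier := {f | {i | f i ≠ 1}.Finite}
  one_mem' := by simp
  mul_mem' := by
    intro f g hf hg
    refine Set.Finite.subset (hf.union hg) ?_
    intro i hi
    rw [Set.mem_union]
    by_contra h
    push_neg at h
    obtain ⟨h1, h2⟩ := h
    simp only [Set.mem_setOf_eq, not_not] at h1 h2
    apply hi
    show f i * g i = 1
    rw [h1, h2, one_mul]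

/-- Condition (i) for relative completeness: both monoids have two elements, at least
one is not a group, and both vertices are adjacent to every other vertex. -/
def RCcondI (G : SimpleGraph V) (M : V → Type*) [∀ α, Monoid (M α)]
    (α β : V) : Prop :=
  Nat.card (M α) = 2 ∧ Nat.card (M β) = 2 ∧
  (¬ IsGroupMonoid (M α) ∨ ¬ IsGroupMonoid (M β)) ∧
  ∀ γ : V, γ ≠ α → γ ≠ β → G.Adj α γ ∧ G.Adj β γ

/-- `G` is relatively complete with respect to the family `M` of vertex monoids. -/
def RelativelyComplete (G : SimpleGraph V) (M : V → Type*)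
    [∀ α, Monoid (M α)] : Prop :=
  (∀ α β : V, α ≠ β → ¬ G.Adj α β →
      RCcondI G M α β ∨ (IsGroupMonoid (M α) ∧ IsGroupMonoid (M β))) ∧
  ∀ α β α' β' : V, α ≠ β → ¬ G.Adj α β → RCcondI G M α β →
    α' ≠ β' → ¬ G.Adj α' β' → RCcondI G M α' β' →
    (α = α' ∧ β = β') ∨ (α = β' ∧ β = α')


section Helpers

namespace Stmt10Aux

variable {S : Type*} [Monoid S]

theorem mem_plIdeal_iff {a x : S} : x ∈ plIdeal a ↔ ∃ s, x = s * a := by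
  constructor
  · rintro ⟨s, rfl⟩; exact ⟨s, rfl⟩
  · rintro ⟨s, rfl⟩; exact ⟨s, rfl⟩

theorem plIdeal_subset_of_eq_mul {a b : S} (s : S) (h : a = s * b) :
    plIdeal a ⊆ plIdeal b := by
  rintro x ⟨u, rfl⟩
  exact ⟨u * s, show u * s * b = u * a by rw [h, mul_assoc]⟩

theorem plIdeal_subset_iff {a b : S} : plIdeal a ⊆ plIdeal b ↔ ∃ s, a = s * b := by
  constructor
  · intro h
    exact mem_plIdeal_iff.mp (h ⟨1, one_mul a⟩)
  · rintro ⟨s, hs⟩; exact plIdeal_subset_of_eq_mul s hs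

theorem plIdeal_eq_of_mutual {a b : S} (s t : S) (h1 : a = s * b) (h2 : b = t * a) :
    plIdeal a = plIdeal b :=
  Set.Subset.antisymm (plIdeal_subset_of_eq_mul s h1) (plIdeal_subset_of_eq_mul t h2)

theorem plIdeal_eq_univ {a : S} (y : S) (h : y * a = 1) : plIdeal a = Set.univ := by
  apply Set.eq_univ_of_forall
  intro x
  exact ⟨x * y, show x * y * a = x by rw [mul_assoc, h, mul_one]⟩

theorem chain_subset {a : ℕ → S} (h : ∀ n, plIdeal (a n) ⊆ plIdeal (a (n + 1))) :
    ∀ n k, plIdeal (a n) ⊆ plIdeal (a (n + k)) := by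
  intro n k
  induction k with
  | zero => exact subset_rfl
  | succ k ih => exact (ih.trans (h (n + k)))

/-- ACCPL transfers along a retraction. -/
theorem accpl_retract {N : Type*} [Monoid N] (f : N →* S) (g : S →* N)
    (hgf : ∀ x, g (f x) = x) (hS : ACCPL S) : ACCPL N := by
  intro a hchain
  have hchainS : ∀ n, plIdeal (f (a n)) ⊆ plIdeal (f (a (n + 1))) := by
    intro n
    obtain ⟨s, hs⟩ := plIdeal_subset_iff.mp (hchain n)
    exact plIdeal_subset_of_eq_mul (f s) (by rw [hs, map_mul])
  obtain ⟨n, hn⟩ := hS (fun n => f (a n)) hchainS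
  refine ⟨n, fun k => ?_⟩
  apply Set.Subset.antisymm
  · obtain ⟨u, hu⟩ := plIdeal_subset_iff.mp (hn k).le
    refine plIdeal_subset_of_eq_mul (g u) ?_
    have := congrArg g hu
    rw [map_mul, hgf, hgf] at this
    exact this
  · exact chain_subset hchain n k

end Stmt10Aux

end Helpers


section RDP

namespace Stmt10Aux

variable {ι : Type*} {M : ι → Type*} [∀ i, Monoid (M i)]

theorem rdp_coe_mul (x y : ↥(restrictedDirectProduct M)) (i : ι) :
    (↑(x * y) : ∀ i, M i) i = (x : ∀ i, M i) i * (y : ∀ i, M i) i := rfl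

/-- each factor retracts off the restricted direct product -/
theorem accpl_factors_of_rdp (h : ACCPL ↥(restrictedDirectProduct M)) (i : ι) :
    ACCPL (M i) := by
  classical
  refine accpl_retract (S := ↥(restrictedDirectProduct M)) ?_ ?_ ?_ h
  · exact (MonoidHom.mulSingle M i).codRestrict _ (fun x => by
      refine Set.Finite.subset (Set.finite_singleton i) ?_
      intro j hj
      simp only [Set.mem_setOf_eq, MonoidHom.mulSingle_apply] at hj
      by_contra hji
      exact hj (Pi.mulSingle_eq_of_ne hji x))
  · exact (Pi.evalMonoidHom M i).comp (restrictedDirectProduct M).subtype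
  · intro x
    simp [MonoidHom.codRestrict]

theorem accpl_rdp (h : ∀ i, ACCPL (M i)) : ACCPL ↥(restrictedDirectProduct M) := by
  classical
  intro a hchain
  choose g hg using fun n => plIdeal_subset_iff.mp (hchain n)
  -- coordinatewise chains
  have hcoord : ∀ i n, ((a n : ∀ j, M j) i) = ((g n : ∀ j, M j) i) * ((a (n+1) : ∀ j, M j) i) :=
    fun i n => by rw [hg n]; rfl
  have hchaini : ∀ i, ∀ n, plIdeal ((a n : ∀ j, M j) i) ⊆ plIdeal ((a (n+1) : ∀ j, M j) i) :=
    fun i n => plIdeal_subset_of_eq_mul _ (hcoord i n)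
  choose ni hni using fun i => h i (fun n => (a n : ∀ j, M j) i) (hchaini i)
  -- the support of a 0
  have hfin : {i | (a 0 : ∀ j, M j) i ≠ 1}.Finite := (a 0).2
  set F := hfin.toFinset with hF
  set N := F.sup ni with hNdef
  -- coordinatewise stabilization from N on
  have hstab : ∀ i k, plIdeal ((a (N + k) : ∀ j, M j) i) = plIdeal ((a N : ∀ j, M j) i) := by
    intro i k
    by_cases hiF : i ∈ F
    · have hle : ni i ≤ N := Finset.le_sup hiF
      have h1 : plIdeal ((a (ni i + (N - ni i)) : ∀ j, M j) i)
          = plIdeal ((a (ni i) : ∀ j, M j) i) := hni i _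
      have h2 : plIdeal ((a (ni i + (N - ni i + k)) : ∀ j, M j) i)
          = plIdeal ((a (ni i) : ∀ j, M j) i) := hni i _
      rw [Nat.add_sub_cancel' hle] at h1
      rw [← Nat.add_assoc, Nat.add_sub_cancel' hle] at h2
      rw [h2, h1]
    · have h0 : (a 0 : ∀ j, M j) i = 1 := by
        by_contra hne
        exact hiF (hfin.mem_toFinset.mpr hne)
      have huniv : ∀ n, plIdeal ((a n : ∀ j, M j) i) = Set.univ := by
        intro n
        obtain ⟨s, hs⟩ := plIdeal_subset_iff.mp
          (chain_subset (a := fun n => (a n : ∀ j, M j) i) (hchaini i) 0 n)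
        simp only [Nat.zero_add] at hs
        exact plIdeal_eq_univ s (by rw [← hs, h0])
      rw [huniv, huniv]
  refine ⟨N, fun k => ?_⟩
  apply Set.Subset.antisymm
  · -- a (N+k) = H * a N
    have hdvd : ∀ i, ∃ c : M i, (a (N + k) : ∀ j, M j) i = c * (a N : ∀ j, M j) i := by
      intro i
      exact mem_plIdeal_iff.mp ((hstab i k) ▸ mem_plIdeal_iff.mpr ⟨1, (one_mul _).symm⟩)
    choose c hc using hdvd
    set H : ∀ i, M i := fun i =>
      if (a N : ∀ j, M j) i = 1 ∧ (a (N + k) : ∀ j, M j) i = 1 then 1 else c i with hHdef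
    have hHfin : {i | H i ≠ 1}.Finite := by
      apply Set.Finite.subset ((a N).2.union ((a (N + k)).2))
      intro i hi
      simp only [Set.mem_setOf_eq, hHdef] at hi
      by_contra hcon
      simp only [Set.mem_union, Set.mem_setOf_eq, not_or, not_not] at hcon
      rw [if_pos ⟨hcon.1, hcon.2⟩] at hi
      exact hi rfl
    refine plIdeal_subset_of_eq_mul (⟨H, hHfin⟩ : ↥(restrictedDirectProduct M)) ?_
    apply Subtype.ext
    funext i
    show (a (N + k) : ∀ j, M j) i = H i * (a N : ∀ j, M j) i
    by_cases hone : (a N : ∀ j, M j) i = 1 ∧ (a (N + k) : ∀ j, M j) i = 1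
    · rw [hHdef]; simp only [if_pos hone]; rw [hone.1, hone.2, one_mul]
    · rw [hHdef]; simp only [if_neg hone]; exact hc i
  · exact chain_subset hchain N k

end Stmt10Aux

end RDP


section Coprod

namespace Stmt10Aux

open Monoid Monoid.CoprodI

variable {ι : Type*} {M : ι → Type*} [∀ i, Monoid (M i)]

/-- A letter is left invertible in its factor. -/
def LinvL (l : Σ i, M i) : Prop := ∃ y, y * l.2 = 1

theorem linvL_one {i : ι} : LinvL (⟨i, 1⟩ : Σ i, M i) := ⟨1, one_mul 1⟩

theorem linvL_of_mul {i : ι} {m h : M i} (hl : LinvL (⟨i, m * h⟩ : Σ i, M i)) :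
    LinvL (⟨i, h⟩ : Σ i, M i) := by
  obtain ⟨y, hy⟩ := hl
  exact ⟨y * m, by rw [mul_assoc]; exact hy⟩

open Classical in
/-- The number of non-left-invertible letters in a list. -/
noncomputable def nuL : List (Σ i, M i) → ℕ
  | [] => 0
  | l :: t => (if LinvL l then 0 else 1) + nuL t

theorem nuL_nil : nuL ([] : List (Σ i, M i)) = 0 := rfl

open Classical in
theorem nuL_cons (l : Σ i, M i) (t : List (Σ i, M i)) :
    nuL (l :: t) = (if LinvL l then 0 else 1) + nuL t := rfl

theorem nuL_zero {l : List (Σ i, M i)} (h : nuL l = 0) : ∀ x ∈ l, LinvL x := by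
  induction l with
  | nil => intro x hx; simp at hx
  | cons y t ih =>
    rw [nuL_cons] at h
    have ht : nuL t = 0 := by
      by_cases hy : LinvL y
      · rw [if_pos hy] at h; omega
      · rw [if_neg hy] at h; omega
    intro x hx
    rcases List.mem_cons.mp hx with rfl | hx
    · by_contra hy
      rw [if_neg hy, ht] at h
      omega
    · exact ih ht x hx

theorem exists_decomp {l : List (Σ i, M i)} (h : nuL l ≠ 0) :
    ∃ (p : List (Σ i, M i)) (a : Σ i, M i) (t : List (Σ i, M i)),
      l = p ++ a :: t ∧ (∀ x ∈ p, LinvL x) ∧ ¬ LinvL a := by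
  induction l with
  | nil => exact absurd nuL_nil h
  | cons y t ih =>
    by_cases hy : LinvL y
    · have ht : nuL t ≠ 0 := by
        rw [nuL_cons, if_pos hy] at h
        omega
      obtain ⟨p, a, t', rfl, hp, ha⟩ := ih ht
      refine ⟨y :: p, a, t', rfl, ?_, ha⟩
      intro x hx
      rcases List.mem_cons.mp hx with rfl | hx
      · exact hy
      · exact hp x hx
    · exact ⟨[], y, t, rfl, by simp, hy⟩

theorem decomp_unique {p₁ p₂ t₁ t₂ : List (Σ i, M i)} {a₁ a₂ : Σ i, M i}
    (ha₁ : ¬ LinvL a₁) (ha₂ : ¬ LinvL a₂)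
    (hp₁ : ∀ x ∈ p₁, LinvL x) (hp₂ : ∀ x ∈ p₂, LinvL x)
    (h : p₁ ++ a₁ :: t₁ = p₂ ++ a₂ :: t₂) :
    p₁ = p₂ ∧ a₁ = a₂ ∧ t₁ = t₂ := by
  induction p₁ generalizing p₂ with
  | nil =>
    cases p₂ with
    | nil =>
      simp only [List.nil_append] at h
      injection h with h1 h2
      exact ⟨rfl, h1, h2⟩
    | cons b q =>
      simp only [List.nil_append, List.cons_append] at h
      injection h with h1 _
      exact absurd (hp₂ b (List.mem_cons_self)) (h1 ▸ ha₁)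
  | cons b q ih =>
    cases p₂ with
    | nil =>
      simp only [List.nil_append, List.cons_append] at h
      injection h with h1 _
      exact absurd (hp₁ b (List.mem_cons_self)) (h1.symm ▸ ha₂)
    | cons b' q' =>
      simp only [List.cons_append] at h
      injection h with h1 h2
      obtain ⟨hq, ha, ht⟩ := ih (fun x hx => hp₁ x (List.mem_cons_of_mem _ hx))
        (fun x hx => hp₂ x (List.mem_cons_of_mem _ hx)) h2
      exact ⟨by rw [h1, hq], ha, ht⟩

/-- `nu w` is the number of non-left-invertible letters of the word `w`. -/
noncomputable def nu (w : Word M) : ℕ := nuL w.toList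

section DecEq

variable [DecidableEq ι] [∀ i, DecidableEq (M i)]

theorem rcons_toList_eq_one {i : ι} {p : Word.Pair M i} (hp : p.head = 1) :
    (Word.rcons p).toList = p.tail.toList := by
  rw [Word.rcons, dif_pos hp]

theorem rcons_toList_ne_one {i : ι} {p : Word.Pair M i} (hp : p.head ≠ 1) :
    (Word.rcons p).toList = ⟨i, p.head⟩ :: p.tail.toList := by
  rw [Word.rcons, dif_neg hp]
  rfl

open Classical in
theorem nu_rcons {i : ι} (p : Word.Pair M i) :
    nu (Word.rcons p) = (if LinvL (⟨i, p.head⟩ : Σ i, M i) then 0 else 1) + nu p.tail := by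
  by_cases hp : p.head = 1
  · have hl : LinvL (⟨i, p.head⟩ : Σ i, M i) := by rw [hp]; exact linvL_one
    rw [nu, rcons_toList_eq_one hp, if_pos hl, Nat.zero_add]
    rfl
  · rw [nu, rcons_toList_ne_one hp, nuL_cons]
    rfl

theorem rcons_equivPair (i : ι) (w : Word M) : Word.rcons (Word.equivPair i w) = w := by
  rw [← Word.equivPair_symm]
  exact (Word.equivPair i).symm_apply_apply w

open Classical in
theorem nu_eq (i : ι) (w : Word M) :
    nu w = (if LinvL (⟨i, (Word.equivPair i w).head⟩ : Σ i, M i) then 0 else 1)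
      + nu (Word.equivPair i w).tail := by
  conv_lhs => rw [← rcons_equivPair i w]
  rw [nu_rcons]

open Classical in
theorem nu_of_smul (i : ι) (m : M i) (w : Word M) :
    nu (of m • w) = (if LinvL (⟨i, m * (Word.equivPair i w).head⟩ : Σ i, M i) then 0 else 1)
      + nu (Word.equivPair i w).tail := by
  rw [Word.of_smul_def, nu_rcons]

theorem nu_le_of_smul (i : ι) (m : M i) (w : Word M) : nu w ≤ nu (of m • w) := by
  rw [nu_of_smul, nu_eq i w]
  apply Nat.add_le_add_right
  by_cases h : LinvL (⟨i, m * (Word.equivPair i w).head⟩ : Σ i, M i)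
  · rw [if_pos h, if_pos (linvL_of_mul h)]
  · rw [if_neg h]
    split <;> omega

theorem nu_le_smul (s : CoprodI M) : ∀ w : Word M, nu w ≤ nu (s • w) := by
  induction s using Monoid.CoprodI.induction_on with
  | one => intro w; rw [one_smul]
  | of i m => exact fun w => nu_le_of_smul i m w
  | mul x y hx hy =>
    intro w
    rw [mul_smul]
    exact (hy w).trans (hx (y • w))

/-- The two words share their maximal left-invertible prefix structure: same index
for the leftmost non-left-invertible letter, same tail after it, and the critical
letters are related by left multiplication. -/
def Crit (w w' : Word M) : Prop :=
  ∃ (i : ι) (h h' c : M i) (p p' t : List (Σ i, M i)),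
    w.toList = p ++ ⟨i, h⟩ :: t ∧ w'.toList = p' ++ ⟨i, h'⟩ :: t ∧
    (∀ x ∈ p, LinvL x) ∧ (∀ x ∈ p', LinvL x) ∧
    ¬ LinvL (⟨i, h⟩ : Σ i, M i) ∧ ¬ LinvL (⟨i, h'⟩ : Σ i, M i) ∧ h' = c * h

theorem crit_refl {w : Word M} (h0 : nu w ≠ 0) : Crit w w := by
  obtain ⟨p, a, t, hl, hp, ha⟩ := exists_decomp (l := w.toList) h0
  obtain ⟨i, x⟩ := a
  exact ⟨i, x, x, 1, p, p, t, hl, hl, hp, hp, ha, ha, (one_mul x).symm⟩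

theorem crit_trans {w₁ w₂ w₃ : Word M} (h12 : Crit w₁ w₂) (h23 : Crit w₂ w₃) :
    Crit w₁ w₃ := by
  obtain ⟨i, h, h', c, p, p', t, e1, e2, hp, hp', nh, nh', hc⟩ := h12
  obtain ⟨j, g, g', d, q, q', s, f1, f2, hq, hq', ng, ng', hd⟩ := h23
  obtain ⟨hpq, hag, hts⟩ := decomp_unique nh' ng hp' hq (e2.symm.trans f1)
  rw [Sigma.mk.inj_iff] at hag
  obtain ⟨rfl, hag⟩ := hag
  have hag' : h' = g := eq_of_heq hag
  refine ⟨i, h, g', d * c, p, q', t, e1, ?_, hp, hq', nh, ng', ?_⟩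
  · rw [f2, hts]
  · rw [hd, ← hag', hc, mul_assoc]

open Classical in
theorem crit_of_smul (i : ι) (m : M i) (w : Word M) (h0 : nu w ≠ 0)
    (he : nu (of m • w) = nu w) : Crit w (of m • w) := by
  set q := Word.equivPair i w with hqdef
  have hw : (Word.rcons q).toList = w.toList := by rw [hqdef, rcons_equivPair]
  have hw' : (of m • w) = Word.rcons ⟨m * q.head, q.tail, q.fstIdx_ne⟩ :=
    Word.of_smul_def i w m
  by_cases hl : LinvL (⟨i, q.head⟩ : Σ i, M i)
  · -- the head (if any) is left invertible; the critical letter lives in the tail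
    have hnuw : nu w = nu q.tail := by
      rw [nu_eq i w, if_pos hl, Nat.zero_add]
    have hlm : LinvL (⟨i, m * q.head⟩ : Σ i, M i) := by
      by_contra hn
      rw [nu_of_smul, ← hqdef, if_neg hn, hnuw] at he
      omega
    have h0t : nuL q.tail.toList ≠ 0 := by
      show nu q.tail ≠ 0
      rw [← hnuw]; exact h0
    obtain ⟨p, a, t, hl2, hp2, ha2⟩ := exists_decomp h0t
    obtain ⟨j, x⟩ := a
    have hwl : w.toList
        = (if q.head = 1 then ([] : List (Σ i, M i)) else [⟨i, q.head⟩]) ++ q.tail.toList := by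
      rw [← hw]
      by_cases h1 : q.head = 1
      · rw [rcons_toList_eq_one h1, if_pos h1, List.nil_append]
      · rw [rcons_toList_ne_one h1, if_neg h1]
        rfl
    have hwl' : (of m • w).toList
        = (if m * q.head = 1 then ([] : List (Σ i, M i)) else [⟨i, m * q.head⟩])
          ++ q.tail.toList := by
      rw [hw']
      by_cases h1 : m * q.head = 1
      · rw [rcons_toList_eq_one h1, if_pos h1, List.nil_append]
      · rw [rcons_toList_ne_one h1, if_neg h1]
        rfl
    refine ⟨j, x, x, 1,
      (if q.head = 1 then ([] : List (Σ i, M i)) else [⟨i, q.head⟩]) ++ p,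
      (if m * q.head = 1 then ([] : List (Σ i, M i)) else [⟨i, m * q.head⟩]) ++ p,
      t, ?_, ?_, ?_, ?_, ha2, ha2, (one_mul x).symm⟩
    · rw [hwl, hl2, List.append_assoc]
    · rw [hwl', hl2, List.append_assoc]
    · intro y hy
      rcases List.mem_append.mp hy with hy | hy
      · split at hy
        · simp at hy
        · rw [List.mem_singleton] at hy
          rw [hy]; exact hl
      · exact hp2 y hy
    · intro y hy
      rcases List.mem_append.mp hy with hy | hy
      · split at hy
        · simp at hy
        · rw [List.mem_singleton] at hy
          rw [hy]; exact hlm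
      · exact hp2 y hy
  · -- the head itself is the critical letter
    have h1 : q.head ≠ 1 := fun h => hl (by rw [h]; exact linvL_one)
    have hnm : ¬ LinvL (⟨i, m * q.head⟩ : Σ i, M i) := fun h => hl (linvL_of_mul h)
    have h1m : m * q.head ≠ 1 := fun h => hnm (by rw [h]; exact linvL_one)
    refine ⟨i, q.head, m * q.head, m, [], [], q.tail.toList, ?_, ?_, by simp, by simp,
      hl, hnm, rfl⟩
    · rw [← hw, rcons_toList_ne_one h1]
      rfl
    · rw [hw', rcons_toList_ne_one (p := ⟨m * q.head, q.tail, q.fstIdx_ne⟩) h1m]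
      rfl

theorem crit_smul (s : CoprodI M) : ∀ w : Word M, nu w ≠ 0 → nu (s • w) = nu w →
    Crit w (s • w) := by
  induction s using Monoid.CoprodI.induction_on with
  | one =>
    intro w h0 _
    rw [one_smul]
    exact crit_refl h0
  | of i m => exact fun w h0 he => crit_of_smul i m w h0 he
  | mul x y hx hy =>
    intro w h0 he
    rw [mul_smul] at he ⊢
    have h1 : nu (y • w) = nu w :=
      le_antisymm (by rw [← he]; exact nu_le_smul x (y • w)) (nu_le_smul y w)
    have h2 : nu (x • y • w) = nu (y • w) := by rw [he, h1]
    exact crit_trans (hy w h0 h1) (hx (y • w) (by rw [h1]; exact h0) h2)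

end DecEq

theorem word_prod_decomp {w : Word M} {p t : List (Σ i, M i)} {i : ι} {h : M i}
    (hw : w.toList = p ++ ⟨i, h⟩ :: t) :
    w.prod = (p.map fun l => of l.2).prod * (of h * (t.map fun l => of l.2).prod) := by
  rw [Word.prod, hw, List.map_append, List.prod_append, List.map_cons, List.prod_cons]

theorem linv_prod_of_linv {p : List (Σ i, M i)} (hp : ∀ x ∈ p, LinvL x) :
    ∃ Q : CoprodI M, Q * (p.map fun l => of l.2).prod = 1 := by
  induction p with
  | nil => exact ⟨1, by simp⟩
  | cons x p ih =>
    obtain ⟨Q, hQ⟩ := ih (fun y hy => hp y (List.mem_cons_of_mem _ hy))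
    obtain ⟨y, hy⟩ := hp x (List.mem_cons_self)
    refine ⟨Q * of y, ?_⟩
    rw [List.map_cons, List.prod_cons, mul_assoc, ← mul_assoc (of y), ← MonoidHom.map_mul,
      hy, MonoidHom.map_one, one_mul, hQ]

/-- If every vertex monoid satisfies ACCPL then so does the free product. -/
theorem accpl_coprodI (hM : ∀ i, ACCPL (M i)) : ACCPL (Monoid.CoprodI M) := by
  classical
  intro a hchain
  choose g hg using fun n => plIdeal_subset_iff.mp (hchain n)
  set w : ℕ → Word M := fun n => a n • Word.empty with hwdef
  have hsm : ∀ n, w n = g n • w (n + 1) := by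
    intro n
    show a n • Word.empty = g n • (a (n + 1) • Word.empty)
    rw [hg n, mul_smul]
  have hprod : ∀ n, (w n).prod = a n := by
    intro n
    show Word.prod (a n • Word.empty) = a n
    rw [Word.prod_smul, Word.prod_empty, mul_one]
  have hmono : ∀ n k, nu (w (n + k)) ≤ nu (w n) := by
    intro n k
    induction k with
    | zero => exact le_rfl
    | succ k ih =>
      have h1 := nu_le_smul (g (n + k)) (w (n + k + 1))
      rw [← hsm (n + k)] at h1
      exact h1.trans ih
  obtain ⟨N, hNmin⟩ : ∃ N, ∀ n, nu (w N) ≤ nu (w n) := by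
    have hmem : sInf (Set.range fun n => nu (w n)) ∈ Set.range fun n => nu (w n) :=
      Nat.sInf_mem ⟨nu (w 0), 0, rfl⟩
    obtain ⟨N, hN⟩ := hmem
    refine ⟨N, fun n => ?_⟩
    have h1 : nu (w N) = sInf (Set.range fun n => nu (w n)) := hN
    rw [h1]
    exact Nat.sInf_le ⟨n, rfl⟩
  have hconst : ∀ k, nu (w (N + k)) = nu (w N) :=
    fun k => le_antisymm (hmono N k) (hNmin (N + k))
  by_cases h0 : nu (w N) = 0
  · refine ⟨N, fun k => ?_⟩
    have huniv : ∀ k, plIdeal (a (N + k)) = Set.univ := by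
      intro k
      have hz : nuL (w (N + k)).toList = 0 := by
        have := hconst k
        rw [h0] at this
        exact this
      obtain ⟨Q, hQ⟩ := linv_prod_of_linv (nuL_zero hz)
      refine plIdeal_eq_univ Q ?_
      have hpr : ((w (N + k)).toList.map fun l => of l.2).prod = a (N + k) := hprod (N + k)
      rw [hpr] at hQ
      exact hQ
    have h2 := huniv 0
    rw [Nat.add_zero] at h2
    rw [huniv k, h2]
  · have hcrit : ∀ k, Crit (w (N + k + 1)) (w (N + k)) := by
      intro k
      have h1 : nu (w (N + k + 1)) ≠ 0 := by
        have : N + k + 1 = N + (k + 1) := rfl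
        rw [this, hconst]
        exact h0
      have h2 : nu (g (N + k) • w (N + k + 1)) = nu (w (N + k + 1)) := by
        rw [← hsm (N + k), hconst k]
        have : N + k + 1 = N + (k + 1) := rfl
        rw [this, hconst]
      have hc := crit_smul (g (N + k)) (w (N + k + 1)) h1 h2
      rw [← hsm (N + k)] at hc
      exact hc
    obtain ⟨p₀, a₀, t, hdec, hp₀, ha₀⟩ := exists_decomp (l := (w N).toList) h0
    obtain ⟨i, h₀⟩ := a₀
    have key : ∀ k, ∃ (x : M i) (p : List (Σ i, M i)),
        (w (N + k)).toList = p ++ ⟨i, x⟩ :: t ∧ (∀ y ∈ p, LinvL y) ∧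
        ¬ LinvL (⟨i, x⟩ : Σ i, M i) := by
      intro k
      induction k with
      | zero => exact ⟨h₀, p₀, by rw [Nat.add_zero]; exact hdec, hp₀, ha₀⟩
      | succ k ih =>
        obtain ⟨x, p, hwl, hp, hx⟩ := ih
        obtain ⟨j, y, y', c, q, q', s, e1, e2, hq, hq', ny, ny', hc⟩ := hcrit k
        obtain ⟨hpq, hag, hts⟩ := decomp_unique hx ny' hp hq' (hwl.symm.trans e2)
        rw [Sigma.mk.inj_iff] at hag
        obtain ⟨rfl, hag⟩ := hag
        exact ⟨y, q, by rw [show N + (k + 1) = N + k + 1 from rfl, e1, hts], hq, ny⟩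
    choose x p hwl hp hx using key
    have hrel : ∀ k, ∃ c : M i, x k = c * x (k + 1) := by
      intro k
      obtain ⟨j, y, y', c, q, q', s, e1, e2, hq, hq', ny, ny', hc⟩ := hcrit k
      obtain ⟨_, hag1, hts1⟩ := decomp_unique (hx (k + 1)) ny (hp (k + 1)) hq
        ((hwl (k + 1)).symm.trans e1)
      obtain ⟨_, hag2, _⟩ := decomp_unique (hx k) ny' (hp k) hq' ((hwl k).symm.trans e2)
      rw [Sigma.mk.inj_iff] at hag1
      obtain ⟨rfl, hag1⟩ := hag1
      rw [Sigma.mk.inj_iff] at hag2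
      have h1' : x (k + 1) = y := eq_of_heq hag1
      have h2' : x k = y' := eq_of_heq hag2.2
      exact ⟨c, by rw [h1', h2', hc]⟩
    have hasc : ∀ k, plIdeal (x k) ⊆ plIdeal (x (k + 1)) := by
      intro k
      obtain ⟨c, hcx⟩ := hrel k
      exact plIdeal_subset_of_eq_mul c hcx
    obtain ⟨m, hm⟩ := hM i x hasc
    refine ⟨N + m, fun k => ?_⟩
    apply Set.Subset.antisymm
    · rw [Nat.add_assoc]
      obtain ⟨e, he⟩ : ∃ e : M i, x (m + k) = e * x m :=
        mem_plIdeal_iff.mp ((hm k) ▸ mem_plIdeal_iff.mpr ⟨1, (one_mul _).symm⟩)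
      obtain ⟨Q, hQ⟩ := linv_prod_of_linv (hp m)
      set P := ((p m).map fun l => of l.2).prod with hPdef
      set P' := ((p (m + k)).map fun l => of l.2).prod with hP'def
      set T := (t.map fun l => of l.2).prod with hTdef
      have hfm : a (N + m) = P * (of (x m) * T) := by
        rw [← hprod (N + m)]
        exact word_prod_decomp (hwl m)
      have hfmk : a (N + (m + k)) = P' * (of (x (m + k)) * T) := by
        rw [← hprod (N + (m + k))]
        exact word_prod_decomp (hwl (m + k))
      refine plIdeal_subset_of_eq_mul (P' * (of e * Q)) ?_
      rw [hfm, hfmk, he, MonoidHom.map_mul]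
      simp only [mul_assoc]
      rw [← mul_assoc Q P, hQ, one_mul]
    · exact chain_subset hchain (N + m) k

end Stmt10Aux

end Coprod


section CoprodRetract

namespace Stmt10Aux

variable {ι : Type*} {M : ι → Type*} [∀ i, Monoid (M i)]

/-- Transport a monoid along an equality of indices. -/
def eqHom {i j : ι} (h : i = j) : M i →* M j where
  toFun x := h ▸ x
  map_one' := by subst h; rfl
  map_mul' x y := by subst h; rfl

open Classical in
/-- The retraction of the free product onto the `i`-th factor. -/
noncomputable def projHom (i : ι) : Monoid.CoprodI M →* M i :=
  Monoid.CoprodI.lift fun j => if h : j = i then eqHom h else 1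

theorem projHom_of (i : ι) (x : M i) : projHom i (Monoid.CoprodI.of x) = x := by
  rw [projHom, Monoid.CoprodI.lift_of, dif_pos rfl]
  rfl

theorem accpl_factors_of_coprodI (h : ACCPL (Monoid.CoprodI M)) (i : ι) : ACCPL (M i) :=
  accpl_retract Monoid.CoprodI.of (projHom i) (projHom_of i) h

end Stmt10Aux

end CoprodRetract

/-- free products and restricted direct products satisfy ACCPL iff every
factor does. -/
theorem stmt10 {ι : Type*} (M : ι → Type*) [∀ i, Monoid (M i)] :
    (ACCPL (Monoid.CoprodI M) ↔ ∀ i, ACCPL (M i)) ∧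
    (ACCPL ↥(restrictedDirectProduct M) ↔ ∀ i, ACCPL (M i)) := by
  refine ⟨⟨fun h i => Stmt10Aux.accpl_factors_of_coprodI h i,
    fun h => Stmt10Aux.accpl_coprodI h⟩,
    ⟨fun h i => Stmt10Aux.accpl_factors_of_rdp h i,
    fun h => Stmt10Aux.accpl_rdp h⟩⟩
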